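/- Let 𝔐 = (M, ⊕, ⪯, 0) be a distance monoid and let G = (G, d) be a finite 𝔐-graph. If there exists a sequence of vertices v_1, v_2, …, v_n (n ≥ 3, vertices not necessarily distinct) such that d(v_i, v_{i+1}) is defined for all 1 ≤ i < n, d(v_1, v_n) is defined, and d(v_1, v_n) ≻ d(v_1, v_2) ⊕ ⋯ ⊕ d(v_{n-1}, v_n), then there exists such a sequence consisting of pairwise distinct vertices. -/

import Mathlib

private lemma sum_subset_le' {ι M : Type*} [AddCommMonoid M] [LinearOrder M] [DecidableEq ι]
    (hzero : ∀ a : M, 0 ≤ a)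
    (hmono : ∀ a b c d : M, a ≤ c → b ≤ d → a + b ≤ c + d)
    {s t : Finset ι} (hst : s ⊆ t) (f : ι → M) :
    ∑ x ∈ s, f x ≤ ∑ x ∈ t, f x := by
  calc ∑ x ∈ s, f x = 0 + ∑ x ∈ s, f x := (zero_add _).symm
    _ ≤ ∑ x ∈ t \ s, f x + ∑ x ∈ s, f x := hmono _ _ _ _ (hzero _) le_rfl
    _ = ∑ x ∈ t, f x := Finset.sum_sdiff hst


/-- If a finite `𝔐`-graph contains a homomorphic image of a non-`𝔐`-metric cycle
(a sequence of not necessarily distinct vertices `v_1, …, v_n`, `n ≥ 3`, with all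
consecutive distances and `d(v_1, v_n)` defined and
`d(v_1, v_n) ≻ d(v_1, v_2) ⊕ ⋯ ⊕ d(v_{n-1}, v_n)`), then it contains such a
sequence with pairwise distinct vertices. -/
theorem nonmetric_cycle_of_homomorphic_image {M V : Type*} [AddCommMonoid M]
    [LinearOrder M] [Fintype V]
    (hzero : ∀ a : M, 0 ≤ a)
    (hmono : ∀ a b c d : M, a ≤ c → b ≤ d → a + b ≤ c + d)
    (E : V → V → Option M)
    (hEsymm : ∀ u v : V, E u v = E v u)
    (hEirr : ∀ u : V, E u u = none)
    (hEpos : ∀ u v : V, ∀ x : M, E u v = some x → x ≠ 0)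
    (hcycle : ∃ (k : ℕ) (v : Fin (k + 1) → V) (e : Fin k → M) (ℓ : M),
        2 ≤ k ∧
        (∀ i : Fin k, E (v i.castSucc) (v i.succ) = some (e i)) ∧
        E (v 0) (v (Fin.last k)) = some ℓ ∧
        (∑ i, e i) < ℓ) :
    ∃ (k : ℕ) (v : Fin (k + 1) → V) (e : Fin k → M) (ℓ : M),
        2 ≤ k ∧ Function.Injective v ∧
        (∀ i : Fin k, E (v i.castSucc) (v i.succ) = some (e i)) ∧
        E (v 0) (v (Fin.last k)) = some ℓ ∧
        (∑ i, e i) < ℓ := by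
  classical
  have hspec := Nat.find_spec hcycle
  set K := Nat.find hcycle with hKdef
  obtain ⟨v, e, ℓ, hk2, hedge, hlast, hsum⟩ := hspec
  have vcongr : ∀ {n1 n2 : ℕ} (p : n1 < K + 1) (q : n2 < K + 1), n1 = n2 →
      v ⟨n1, p⟩ = v ⟨n2, q⟩ := by
    intro n1 n2 p q h; subst h; rfl
  have hedgeN : ∀ (n : ℕ) (hn : n < K),
      E (v ⟨n, by omega⟩) (v ⟨n + 1, by omega⟩) = some (e ⟨n, hn⟩) := by
    intro n hn
    exact hedge ⟨n, hn⟩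
  have hv0 : v 0 = v ⟨0, by omega⟩ := rfl
  have hvlast : v (Fin.last K) = v ⟨K, by omega⟩ := rfl
  refine ⟨K, v, e, ℓ, hk2, ?_, hedge, hlast, hsum⟩
  have key : ∀ i j : Fin (K + 1), i < j → v i = v j → False := by
    intro i j hij heq
    have hab : i.1 < j.1 := hij
    have hbk : j.1 ≤ K := by omega
    set a := i.1 with ha
    set b := j.1 with hb
    have heq' : v ⟨a, by omega⟩ = v ⟨b, by omega⟩ := heq
    by_cases hcase : b - a = K
    · -- then a = 0 and b = K : the endpoints coincide, contradicting irreflexivity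
      have ha0 : a = 0 := by omega
      have hbK : b = K := by omega
      have h1 : v 0 = v (Fin.last K) := by
        rw [hv0, hvlast]
        rw [vcongr _ _ ha0.symm, vcongr _ _ hbK.symm]
        exact heq'
      rw [h1, hEirr] at hlast
      exact Option.some_ne_none ℓ hlast.symm
    · set m := b - a with hm
      have hm1 : 1 ≤ m := by omega
      have hmk : m < K := by omega
      set k' := K - m with hk'
      have hk'1 : 1 ≤ k' := by omega
      have hba : b = a + m := by omega
      have hak' : a ≤ k' := by omega
      -- the index embedding
      set ι : Fin k' → Fin K := fun t =>
        if t.1 < a then ⟨t.1, by have := t.2; omega⟩ else ⟨t.1 + m, by have := t.2; omega⟩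
        with hιdef
      have hιval : ∀ t : Fin k', (ι t).1 = if t.1 < a then t.1 else t.1 + m := by
        intro t
        simp only [hιdef]
        split_ifs <;> rfl
      have hιinj : Function.Injective ι := by
        intro s t h
        have h' := congrArg Fin.val h
        rw [hιval, hιval] at h'
        apply Fin.ext
        split_ifs at h' <;> omega
      set w : Fin (k' + 1) → V := fun t =>
        if t.1 ≤ a then v ⟨t.1, by have := t.2; omega⟩ else v ⟨t.1 + m, by have := t.2; omega⟩
        with hwdef
      set e' : Fin k' → M := fun t => e (ι t) with he'def
      -- the consecutive edges
      have hedges' : ∀ t : Fin k', E (w t.castSucc) (w t.succ) = some (e' t) := by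
        intro t
        have htk : t.1 < k' := t.2
        have hc : (t.castSucc).1 = t.1 := rfl
        have hs : (t.succ).1 = t.1 + 1 := rfl
        simp only [hwdef, he'def, hιdef, hc, hs]
        rcases lt_trichotomy t.1 a with hlt | heqa | hgt
        · rw [if_pos (by omega : t.1 ≤ a), if_pos (by omega : t.1 + 1 ≤ a),
            if_pos hlt]
          exact hedgeN t.1 (by omega)
        · rw [if_pos (by omega : t.1 ≤ a), if_neg (by omega : ¬ t.1 + 1 ≤ a),
            if_neg (by omega : ¬ t.1 < a)]
          rw [vcongr _ (by omega : a < K + 1) heqa, heq',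
            vcongr _ (by omega : t.1 + m + 1 < K + 1) (by omega : t.1 + 1 + m = t.1 + m + 1),
            vcongr (by omega : b < K + 1) (by omega : t.1 + m < K + 1) (by omega : b = t.1 + m)]
          exact hedgeN (t.1 + m) (by omega)
        · rw [if_neg (by omega : ¬ t.1 ≤ a), if_neg (by omega : ¬ t.1 + 1 ≤ a),
            if_neg (by omega : ¬ t.1 < a)]
          rw [vcongr _ (by omega : t.1 + m + 1 < K + 1) (by omega : t.1 + 1 + m = t.1 + m + 1)]
          exact hedgeN (t.1 + m) (by omega)
      -- the long edge
      have hlast' : E (w 0) (w (Fin.last k')) = some ℓ := by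
        have h00 : ((0 : Fin (k' + 1)) : ℕ) = 0 := rfl
        have h0 : w 0 = v 0 := by
          simp only [hwdef, h00]
          rw [if_pos (by omega : (0:ℕ) ≤ a)]
          rw [hv0]
        have hl : w (Fin.last k') = v (Fin.last K) := by
          simp only [hwdef, Fin.val_last, hvlast]
          by_cases hk'a : k' ≤ a
          · have hka : k' = a := by omega
            have hbK : b = K := by omega
            rw [if_pos hk'a, vcongr _ (by omega : a < K + 1) hka]
            rw [heq']
            exact vcongr _ _ (by omega)
          · rw [if_neg hk'a]
            exact vcongr _ _ (by omega)
        rw [h0, hl]; exact hlast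
      -- the sum bound
      have hsum' : (∑ t, e' t) < ℓ := by
        have h1 : (∑ t, e' t) = ∑ x ∈ Finset.univ.image ι, e x := by
          rw [Finset.sum_image (fun x _ y _ h => hιinj h)]
        have h2 : ∑ x ∈ Finset.univ.image ι, e x ≤ ∑ x, e x :=
          sum_subset_le' hzero hmono (Finset.subset_univ _) e
        calc (∑ t, e' t) = ∑ x ∈ Finset.univ.image ι, e x := h1
          _ ≤ ∑ x, e x := h2
          _ < ℓ := hsum
      -- now k' ≥ 2, since k' = 1 is impossible
      by_cases hk'2 : 2 ≤ k'
      · exact Nat.find_min hcycle (by omega : k' < K) ⟨w, e', ℓ, hk'2, hedges', hlast', hsum'⟩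
      · -- k' = 1
        have hk'eq : k' = 1 := by omega
        set z : Fin k' := ⟨0, by omega⟩ with hzdef
        have hz1 : z.castSucc = (0 : Fin (k' + 1)) := Fin.ext (by simp [hzdef])
        have hz2 : z.succ = Fin.last k' := Fin.ext (by simp [hzdef, Fin.val_last]; omega)
        have hE1 := hedges' z
        rw [hz1, hz2, hlast'] at hE1
        have heℓ : ℓ = e' z := Option.some.inj hE1
        have hle : e' z ≤ ∑ t, e' t := by
          have := sum_subset_le' hzero hmono (Finset.subset_univ {z}) e'
          simpa using this
        rw [heℓ] at hsum'
        exact absurd (lt_of_le_of_lt hle hsum') (lt_irrefl _)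
  intro i j hij
  by_contra hne
  rcases lt_trichotomy i j with h | h | h
  · exact key i j h hij
  · exact hne h
  · exact key j i h hij.symm
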